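/- Let A be an abelian category and Y an object of A such that all set-indexed products Y^I exist and such that all set-indexed coproducts Y^{(I)} exist. Then Y is pure-injective (for every nonempty set I there is φ : Y^I → Y with φ ∘ ι_j = 1_Y for all j, where ι_j is the j-th injection into the product) if and only if for every set I the summation map s_Y : Y^{(I)} → Y factors through the canonical morphism κ_Y : Y^{(I)} → Y^I. -/
import Mathlib


open CategoryTheory CategoryTheory.Limits

universe v u

namespace Paper

variable {C : Type u} [Category.{v} C] [Abelian C]

/-- The `j`-th "injection into the product" `ι_j : Y → Y^I`, determined by
`π_i ∘ ι_j = δ_{ij} · 1_Y`. -/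
noncomputable def prodIota (Y : C) {I : Type v} [DecidableEq I]
    [HasProduct (fun _ : I => Y)] (j : I) : Y ⟶ ∏ᶜ (fun _ : I => Y) :=
  Pi.lift fun i => if i = j then 𝟙 Y else 0

/-- The canonical morphism `κ_Y : Y^{(I)} → Y^I`, determined by
`π_k ∘ κ_Y ∘ λ_j = δ_{jk} · 1_Y`. -/
noncomputable def kappa (Y : C) (I : Type v) [DecidableEq I]
    [HasProduct (fun _ : I => Y)] [HasCoproduct (fun _ : I => Y)] :
    (∐ (fun _ : I => Y)) ⟶ ∏ᶜ (fun _ : I => Y) :=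
  Sigma.desc fun j => prodIota Y j

/-- The summation map `s_Y : Y^{(I)} → Y`, with `s_Y ∘ λ_j = 1_Y` for all `j`. -/
noncomputable def summation (Y : C) (I : Type v) [HasCoproduct (fun _ : I => Y)] :
    (∐ (fun _ : I => Y)) ⟶ Y :=
  Sigma.desc fun _ => 𝟙 Y

/-- `Y` is pure-injective (for every nonempty set `I` there is
`φ : Y^I → Y` with `φ ∘ ι_j = 1_Y` for all `j`) if and only if for every set `I` the
summation map `s_Y : Y^{(I)} → Y` factors through `κ_Y : Y^{(I)} → Y^I`. -/
theorem statement13 (Y : C) [∀ I : Type v, HasProduct (fun _ : I => Y)]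
    [∀ I : Type v, HasCoproduct (fun _ : I => Y)] :
    (∀ (I : Type v) [DecidableEq I], Nonempty I →
      ∃ φ : (∏ᶜ (fun _ : I => Y)) ⟶ Y, ∀ j : I, prodIota Y j ≫ φ = 𝟙 Y) ↔
    (∀ (I : Type v) [DecidableEq I],
      ∃ ψ : (∏ᶜ (fun _ : I => Y)) ⟶ Y, kappa Y I ≫ ψ = summation Y I) := by
  constructor
  · intro h I _
    by_cases hI : Nonempty I
    · obtain ⟨φ, hφ⟩ := h I hI
      refine ⟨φ, ?_⟩
      ext j
      simp [kappa, summation, hφ j]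
    · refine ⟨0, ?_⟩
      ext j
      exact absurd ⟨j⟩ hI
  · intro h I _ hI
    obtain ⟨ψ, hψ⟩ := h I
    refine ⟨ψ, fun j => ?_⟩
    have := Sigma.ι (fun _ : I => Y) j ≫= hψ
    simpa [kappa, summation] using this

end Paper
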